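/- For every pair A₁, A₂ of closed star bodies in ℝ^d, the Attouch–Wets distance is dominated by the radial Attouch–Wets distance: d_{AW}(A₁,A₂) ≤ d_{AW^r}(A₁,A₂). -/

import Mathlib

open scoped ENNReal

noncomputable section

/-- Radial function of a set `A ⊆ ℝ^d` in direction `θ`. -/
def radialFn {d : ℕ} (A : Set (EuclideanSpace ℝ (Fin d)))
    (θ : EuclideanSpace ℝ (Fin d)) : ℝ≥0∞ :=
  sSup (ENNReal.ofReal '' {r : ℝ | 0 ≤ r ∧ r • θ ∈ A})

/-- A star set: nonempty and closed under scaling by `t ∈ [0,1]`. -/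
def IsStarSet {d : ℕ} (A : Set (EuclideanSpace ℝ (Fin d))) : Prop :=
  A.Nonempty ∧ ∀ a ∈ A, ∀ t : ℝ, 0 ≤ t → t ≤ 1 → t • a ∈ A

/-- A star body: a radially closed star set. -/
def IsStarBody {d : ℕ} (A : Set (EuclideanSpace ℝ (Fin d))) : Prop :=
  IsStarSet A ∧ ∀ θ : EuclideanSpace ℝ (Fin d), ‖θ‖ = 1 → radialFn A θ ≠ ⊤ →
    (radialFn A θ).toReal • θ ∈ A

open scoped Classical in
/-- The radial distance from a point `x` to a star body `A`:
`0` if `x ∈ A`, and `‖x‖ - ρ_A(x/‖x‖)` otherwise. -/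
def radialDist {d : ℕ} (x : EuclideanSpace ℝ (Fin d))
    (A : Set (EuclideanSpace ℝ (Fin d))) : ℝ :=
  if x ∈ A then 0 else ‖x‖ - (radialFn A (‖x‖⁻¹ • x)).toReal

/-- The radial Attouch–Wets distance between star bodies. -/
def dAWr {d : ℕ} (A₁ A₂ : Set (EuclideanSpace ℝ (Fin d))) : ℝ :=
  ⨆ j : ℕ, min (1 / ((j : ℝ) + 1))
    (⨆ x : Metric.closedBall (0 : EuclideanSpace ℝ (Fin d)) ((j : ℝ) + 1),
      |radialDist (x : EuclideanSpace ℝ (Fin d)) A₁ -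
        radialDist (x : EuclideanSpace ℝ (Fin d)) A₂|)


/-- The Attouch–Wets distance between nonempty closed sets. -/
def dAW {d : ℕ} (C₁ C₂ : Set (EuclideanSpace ℝ (Fin d))) : ℝ :=
  ⨆ j : ℕ, min (1 / ((j : ℝ) + 1))
    (⨆ x : Metric.ball (0 : EuclideanSpace ℝ (Fin d)) ((j : ℝ) + 1),
      |Metric.infDist (x : EuclideanSpace ℝ (Fin d)) C₁ -
        Metric.infDist (x : EuclideanSpace ℝ (Fin d)) C₂|)

section Aux

variable {d : ℕ}

local notation "E" => EuclideanSpace ℝ (Fin d)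

lemma StarAux.zero_mem {A : Set E} (h : IsStarSet A) : (0 : E) ∈ A := by
  obtain ⟨a, ha⟩ := h.1
  simpa using h.2 a ha 0 le_rfl zero_le_one

lemma StarAux.radialFn_spec {A : Set E} (h : IsStarSet A) (hc : IsClosed A)
    {x : E} (hx : x ∉ A) :
    (radialFn A (‖x‖⁻¹ • x)).toReal ≤ ‖x‖ ∧
      (radialFn A (‖x‖⁻¹ • x)).toReal • (‖x‖⁻¹ • x) ∈ A := by
  have hx0 : x ≠ 0 := fun hh => hx (hh ▸ StarAux.zero_mem h)
  have hnx : ‖x‖ ≠ 0 := norm_ne_zero_iff.mpr hx0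
  set θ : E := ‖x‖⁻¹ • x with hθ
  have hxθ : ‖x‖ • θ = x := by rw [hθ, smul_smul, mul_inv_cancel₀ hnx, one_smul]
  set S : Set ℝ := {r : ℝ | 0 ≤ r ∧ r • θ ∈ A} with hS
  have hS0 : (0:ℝ) ∈ S := ⟨le_rfl, by simpa using StarAux.zero_mem h⟩
  have hSle : ∀ r ∈ S, r ≤ ‖x‖ := by
    intro r hr
    by_contra hlt
    push_neg at hlt
    have hr0 : 0 < r := lt_of_le_of_lt (norm_nonneg x) hlt
    have := h.2 (r • θ) hr.2 (‖x‖ / r) (div_nonneg (norm_nonneg x) hr0.le)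
      ((div_le_one hr0).mpr hlt.le)
    rw [smul_smul, div_mul_cancel₀ _ hr0.ne', hxθ] at this
    exact hx this
  have hbdd : BddAbove S := ⟨‖x‖, hSle⟩
  have hSclosed : IsClosed S := by
    have h1 : IsClosed {r : ℝ | r • θ ∈ A} :=
      hc.preimage (continuous_id.smul continuous_const)
    have h2 : S = Set.Ici (0:ℝ) ∩ {r : ℝ | r • θ ∈ A} := rfl
    rw [h2]; exact isClosed_Ici.inter h1
  have hmem : sSup S ∈ S := hSclosed.csSup_mem ⟨0, hS0⟩ hbdd
  have hmle : sSup S ≤ ‖x‖ := csSup_le ⟨0, hS0⟩ hSle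
  have hm0 : 0 ≤ sSup S := le_csSup hbdd hS0
  have hrad : radialFn A θ = ENNReal.ofReal (sSup S) := by
    apply le_antisymm
    · apply sSup_le
      rintro _ ⟨r, hr, rfl⟩
      exact ENNReal.ofReal_le_ofReal (le_csSup hbdd hr)
    · exact le_sSup ⟨sSup S, hmem, rfl⟩
  rw [hrad, ENNReal.toReal_ofReal hm0]
  exact ⟨hmle, hmem.2⟩

lemma StarAux.radialDist_nonneg {A : Set E} (h : IsStarSet A) (hc : IsClosed A)
    (x : E) : 0 ≤ radialDist x A := by
  rw [radialDist]
  split_ifs with hx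
  · exact le_rfl
  · linarith [(StarAux.radialFn_spec h hc hx).1]

lemma StarAux.radialDist_le_norm (A : Set E) (x : E) : radialDist x A ≤ ‖x‖ := by
  rw [radialDist]
  split_ifs with hx
  · exact norm_nonneg x
  · have := ENNReal.toReal_nonneg (a := radialFn A (‖x‖⁻¹ • x))
    linarith

lemma StarAux.infDist_le_radialDist {A : Set E} (h : IsStarSet A) (hc : IsClosed A)
    (x : E) : Metric.infDist x A ≤ radialDist x A := by
  by_cases hx : x ∈ A
  · rw [Metric.infDist_zero_of_mem hx, radialDist, if_pos hx]
  · obtain ⟨hle, hmem⟩ := StarAux.radialFn_spec h hc hx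
    have hx0 : x ≠ 0 := fun hh => hx (hh ▸ StarAux.zero_mem h)
    have hnx : ‖x‖ ≠ 0 := norm_ne_zero_iff.mpr hx0
    have hxθ : ‖x‖ • (‖x‖⁻¹ • x) = x := by
      rw [smul_smul, mul_inv_cancel₀ hnx, one_smul]
    have hnθ : ‖(‖x‖⁻¹ • x : E)‖ = 1 := by
      rw [norm_smul, norm_inv, norm_norm, inv_mul_cancel₀ hnx]
    set t := (radialFn A (‖x‖⁻¹ • x)).toReal with ht
    rw [radialDist, if_neg hx]
    calc Metric.infDist x A ≤ dist x (t • (‖x‖⁻¹ • x)) :=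
          Metric.infDist_le_dist_of_mem hmem
      _ = ‖(‖x‖ - t) • (‖x‖⁻¹ • x)‖ := by
          rw [dist_eq_norm, sub_smul, hxθ]
      _ = |‖x‖ - t| * 1 := by
          rw [norm_smul, Real.norm_eq_abs, hnθ]
      _ = ‖x‖ - t := by rw [mul_one, abs_of_nonneg (by linarith)]

lemma StarAux.proj_dist_le (x a : E) (h : ‖x‖ ≤ ‖a‖) :
    ‖x - (‖x‖ / ‖a‖) • a‖ ≤ ‖x - a‖ := by
  rcases eq_or_ne a 0 with rfl | ha
  · simp
  · have ha0 : 0 < ‖a‖ := norm_pos_iff.mpr ha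
    set t := ‖x‖ / ‖a‖ with htdef
    have ht0 : 0 ≤ t := div_nonneg (norm_nonneg x) ha0.le
    have ht1 : t ≤ 1 := (div_le_one ha0).mpr h
    have htn : t * ‖a‖ = ‖x‖ := div_mul_cancel₀ _ ha0.ne'
    have hai : (inner ℝ x a : ℝ) ≤ ‖x‖ * ‖a‖ := real_inner_le_norm x a
    have hsq : ‖x - t • a‖ ^ 2 ≤ ‖x - a‖ ^ 2 := by
      rw [norm_sub_sq_real, norm_sub_sq_real, real_inner_smul_right, norm_smul,
        Real.norm_eq_abs, abs_of_nonneg ht0, mul_pow]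
      nlinarith [hai, htn, ht0, ht1, ha0, sq_nonneg (1 - t), sq_nonneg ((1 - t) * ‖a‖),
        mul_nonneg (sub_nonneg.2 ht1) (sub_nonneg.2 hai)]
    calc ‖x - t • a‖ = Real.sqrt (‖x - t • a‖ ^ 2) :=
          (Real.sqrt_sq (norm_nonneg _)).symm
      _ ≤ Real.sqrt (‖x - a‖ ^ 2) := Real.sqrt_le_sqrt hsq
      _ = ‖x - a‖ := Real.sqrt_sq (norm_nonneg _)

lemma StarAux.key {c : ℝ} (A₁ A₂ : Set E) (h₁ : IsStarSet A₁) (h₂ : IsStarSet A₂)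
    (hc₁ : IsClosed A₁) (hc₂ : IsClosed A₂) {x : E} (hx : ‖x‖ ≤ c) :
    Metric.infDist x A₂ - Metric.infDist x A₁ ≤
      ⨆ y : Metric.closedBall (0 : E) c,
        |radialDist (y : E) A₁ - radialDist (y : E) A₂| := by
  obtain ⟨a, haA, hda⟩ := hc₁.exists_infDist_eq_dist h₁.1 x
  obtain ⟨a', ha'A, ha'n, ha'd⟩ :
      ∃ a' ∈ A₁, ‖a'‖ ≤ ‖x‖ ∧ dist x a' ≤ dist x a := by
    by_cases hna : ‖a‖ ≤ ‖x‖
    · exact ⟨a, haA, hna, le_rfl⟩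
    · push_neg at hna
      have ha0 : 0 < ‖a‖ := lt_of_le_of_lt (norm_nonneg x) hna
      refine ⟨(‖x‖ / ‖a‖) • a, h₁.2 a haA _ (div_nonneg (norm_nonneg x) ha0.le)
        ((div_le_one ha0).mpr hna.le), ?_, ?_⟩
      · rw [norm_smul, Real.norm_eq_abs,
          abs_of_nonneg (div_nonneg (norm_nonneg x) ha0.le),
          div_mul_cancel₀ _ ha0.ne']
      · rw [dist_eq_norm, dist_eq_norm]
        exact StarAux.proj_dist_le x a hna.le
  have hbdd : BddAbove (Set.range fun y : Metric.closedBall (0 : E) c =>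
      |radialDist (y : E) A₁ - radialDist (y : E) A₂|) := by
    refine ⟨2 * c, ?_⟩
    rintro _ ⟨y, rfl⟩
    have hy : ‖(y : E)‖ ≤ c := by
      exact mem_closedBall_zero_iff.mp y.2
    have n1 := StarAux.radialDist_nonneg h₁ hc₁ (y : E)
    have n2 := StarAux.radialDist_nonneg h₂ hc₂ (y : E)
    have l1 := StarAux.radialDist_le_norm A₁ (y : E)
    have l2 := StarAux.radialDist_le_norm A₂ (y : E)
    rw [abs_le]
    constructor <;> linarith
  have ha'mem : a' ∈ Metric.closedBall (0 : E) c := by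
    exact mem_closedBall_zero_iff.mpr (le_trans ha'n hx)
  have h1 : radialDist a' A₂ ≤
      ⨆ y : Metric.closedBall (0 : E) c,
        |radialDist (y : E) A₁ - radialDist (y : E) A₂| := by
    have hz : radialDist a' A₁ = 0 := by rw [radialDist, if_pos ha'A]
    have habs : |radialDist a' A₁ - radialDist a' A₂| = radialDist a' A₂ := by
      rw [hz, zero_sub, abs_neg, abs_of_nonneg (StarAux.radialDist_nonneg h₂ hc₂ a')]
    have := le_ciSup hbdd (⟨a', ha'mem⟩ : Metric.closedBall (0 : E) c)
    rwa [habs] at this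
  have h2 : Metric.infDist x A₂ ≤ Metric.infDist a' A₂ + dist x a' :=
    Metric.infDist_le_infDist_add_dist
  have h3 : Metric.infDist a' A₂ ≤ radialDist a' A₂ :=
    StarAux.infDist_le_radialDist h₂ hc₂ a'
  have h4 : dist x a' ≤ Metric.infDist x A₁ := hda ▸ ha'd
  linarith

end Aux

theorem dAW_le_dAWr {d : ℕ} (A₁ A₂ : Set (EuclideanSpace ℝ (Fin d)))
    (hA₁ : IsStarSet A₁) (hA₂ : IsStarSet A₂)
    (hc₁ : IsClosed A₁) (hc₂ : IsClosed A₂) :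
    dAW A₁ A₂ ≤ dAWr A₁ A₂ := by
  rw [dAW, dAWr]
  set R : ℕ → ℝ := fun j =>
    ⨆ x : Metric.closedBall (0 : EuclideanSpace ℝ (Fin d)) ((j : ℝ) + 1),
      |radialDist (x : EuclideanSpace ℝ (Fin d)) A₁ -
        radialDist (x : EuclideanSpace ℝ (Fin d)) A₂| with hR
  have hRbdd : BddAbove (Set.range fun j : ℕ => min (1 / ((j : ℝ) + 1)) (R j)) := by
    refine ⟨1, ?_⟩
    rintro _ ⟨j, rfl⟩
    refine le_trans (min_le_left _ _) ?_
    rw [div_le_one (by positivity)]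
    linarith [Nat.cast_nonneg (α := ℝ) j]
  refine ciSup_le fun j => ?_
  have hj1 : (0 : ℝ) < (j : ℝ) + 1 := by positivity
  haveI : Nonempty (Metric.ball (0 : EuclideanSpace ℝ (Fin d)) ((j : ℝ) + 1)) :=
    ⟨⟨0, Metric.mem_ball_self hj1⟩⟩
  have hS : (⨆ x : Metric.ball (0 : EuclideanSpace ℝ (Fin d)) ((j : ℝ) + 1),
      |Metric.infDist (x : EuclideanSpace ℝ (Fin d)) A₁ -
        Metric.infDist (x : EuclideanSpace ℝ (Fin d)) A₂|) ≤ R j := by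
    refine ciSup_le fun x => ?_
    have hxle : ‖(x : EuclideanSpace ℝ (Fin d))‖ ≤ (j : ℝ) + 1 := by
      have := x.2
      rw [Metric.mem_ball, dist_zero_right] at this
      exact this.le
    rw [abs_sub_le_iff]
    constructor
    · have hk := StarAux.key A₂ A₁ hA₂ hA₁ hc₂ hc₁ hxle
      have heq : (⨆ y : Metric.closedBall (0 : EuclideanSpace ℝ (Fin d)) ((j : ℝ) + 1),
          |radialDist (y : EuclideanSpace ℝ (Fin d)) A₂ -
            radialDist (y : EuclideanSpace ℝ (Fin d)) A₁|) = R j := by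
        rw [hR]
        exact congrArg iSup (funext fun y => abs_sub_comm _ _)
      rwa [heq] at hk
    · exact StarAux.key A₁ A₂ hA₁ hA₂ hc₁ hc₂ hxle
  refine le_trans (min_le_min le_rfl hS) ?_
  exact le_ciSup hRbdd j
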